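/- Let Z be a finite set with |Z| ≥ 2, and suppose there exist |Z| − 1 mutually disjoint, symmetric and irreflexive binary relations S_0, …, S_{|Z|−2} on Z, each with domain equal to Z, whose union is Z × Z − Id_Z. Then |Z| is even. -/

import Mathlib

open Finset

lemma even_card_of_fpf_involution {α : Type*} [DecidableEq α] (s : Finset α) (f : α → α)
    (hmem : ∀ x ∈ s, f x ∈ s) (hinv : ∀ x ∈ s, f (f x) = x) (hne : ∀ x ∈ s, f x ≠ x) :
    Even s.card := by
  induction s using Finset.strongInduction with
  | _ s ih =>
    rcases s.eq_empty_or_nonempty with rfl | ⟨x, hx⟩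
    · simp
    · have hfx := hmem x hx
      have hxfx : f x ≠ x := hne x hx
      have hpair : ({x, f x} : Finset α) ⊆ s := by
        intro y hy; simp at hy; rcases hy with rfl | rfl <;> assumption
      have hsub : (s \ {x, f x}).card + 2 = s.card := by
        rw [Finset.card_sdiff_of_subset hpair, Finset.card_pair (Ne.symm hxfx)]
        have h2 : 2 ≤ s.card := by
          have := Finset.card_le_card hpair
          rwa [Finset.card_pair (Ne.symm hxfx)] at this
        omega
      have hss : s \ {x, f x} ⊂ s :=
        Finset.sdiff_ssubset hpair (by simp)
      have finj : ∀ a ∈ s, ∀ b ∈ s, f a = f b → a = b := by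
        intro a ha b hb hfab
        rw [← hinv a ha, hfab, hinv b hb]
      have heven := ih _ hss
        (fun y hy => by
          simp only [Finset.mem_sdiff, Finset.mem_insert, Finset.mem_singleton] at hy ⊢
          obtain ⟨hys, hy1⟩ := hy
          refine ⟨hmem y hys, ?_⟩
          rintro (h | h)
          · exact hy1 (Or.inr (by rw [← hinv y hys, h]))
          · exact hy1 (Or.inl (finj y hys x hx h)))
        (fun y hy => hinv y (Finset.mem_sdiff.mp hy).1)
        (fun y hy => hne y (Finset.mem_sdiff.mp hy).1)
      obtain ⟨r, hr⟩ := heven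
      exact ⟨r + 1, by omega⟩

/-- If a finite set `Z` with `|Z| ≥ 2` carries `|Z| − 1` mutually disjoint, symmetric and
irreflexive binary relations, each with domain `Z`, whose union is `Z × Z − Id_Z`,
then `|Z|` is even. -/
theorem even_card_of_relation_decomposition {Z : Type*} [Fintype Z]
    (hZ : 2 ≤ Fintype.card Z)
    (S : Fin (Fintype.card Z - 1) → Set (Z × Z))
    (hdisj : ∀ i j, i ≠ j → S i ∩ S j = ∅)
    (hsymm : ∀ i a b, (a, b) ∈ S i → (b, a) ∈ S i)
    (hirr : ∀ i z, (z, z) ∉ S i)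
    (hdom : ∀ i a, ∃ b, (a, b) ∈ S i)
    (hunion : (⋃ i, S i) = {x : Z × Z | x.1 ≠ x.2}) :
    Even (Fintype.card Z) := by
  classical
  let n := Fintype.card Z
  let k := Fintype.card Z - 1
  have hk1 : 1 ≤ k := by omega
  let T : Fin k → Finset (Z × Z) := fun i => (S i).toFinset
  have hU : (Finset.univ : Finset (Fin k)).biUnion T = (Finset.univ : Finset Z).offDiag := by
    ext x
    simp only [Finset.mem_biUnion, Finset.mem_univ, true_and, Finset.mem_offDiag, T,
      Set.mem_toFinset]
    constructor
    · rintro ⟨i, hi⟩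
      have hx : x ∈ ⋃ i, S i := Set.mem_iUnion.mpr ⟨i, hi⟩
      rw [hunion] at hx
      exact hx
    · rintro hne
      have hx : x ∈ ⋃ i, S i := by rw [hunion]; exact hne
      exact Set.mem_iUnion.mp hx
  have hdisj' : ∀ i ∈ (Finset.univ : Finset (Fin k)), ∀ j ∈ (Finset.univ : Finset (Fin k)),
      i ≠ j → Disjoint (T i) (T j) := by
    intro i _ j _ hij
    rw [Finset.disjoint_left]
    intro x hxi hxj
    simp only [T, Set.mem_toFinset] at hxi hxj
    have hx : x ∈ S i ∩ S j := ⟨hxi, hxj⟩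
    rw [hdisj i j hij] at hx
    exact hx
  have hsum : ∑ i, (T i).card = n * n - n := by
    rw [← Finset.card_biUnion hdisj', hU, Finset.offDiag_card, Finset.card_univ]
  have hge : ∀ i, n ≤ (T i).card := by
    intro i
    choose g hg using hdom i
    have hc : (Finset.univ : Finset Z).card ≤ (T i).card := by
      apply Finset.card_le_card_of_injOn (fun a => (a, g a))
      · intro a _; simp only [T, Finset.mem_coe, Set.mem_toFinset]; exact hg a
      · intro a _ b _ hab
        exact congrArg Prod.fst hab
    rwa [Finset.card_univ] at hc
  let i0 : Fin k := ⟨0, hk1⟩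
  have hle : (T i0).card ≤ n := by
    by_contra h
    push_neg at h
    have hlt : k * n < ∑ i, (T i).card := by
      calc k * n = ∑ _i : Fin k, n := by
            simp [Finset.sum_const, Finset.card_univ, mul_comm]
        _ < ∑ i, (T i).card :=
            Finset.sum_lt_sum (fun i _ => hge i) ⟨i0, Finset.mem_univ _, h⟩
    rw [hsum] at hlt
    have hkn : k * n = n * n - n := by
      have h1 : k = n - 1 := rfl
      have h2 : 2 ≤ n := hZ
      rw [h1, Nat.sub_mul, one_mul]
    omega
  have hcard : (T i0).card = n := le_antisymm hle (hge i0)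
  have heven : Even (T i0).card := by
    apply even_card_of_fpf_involution (T i0) (fun x => (x.2, x.1))
    · intro x hx
      simp only [T, Set.mem_toFinset] at hx ⊢
      exact hsymm i0 x.1 x.2 hx
    · intro x _; rfl
    · intro x hx h
      simp only [T, Set.mem_toFinset] at hx
      have hx12 : x.2 = x.1 := congrArg Prod.fst h
      have hxx : (x.1, x.2) ∈ S i0 := hx
      rw [← hx12] at hxx
      exact hirr i0 x.2 hxx
  rwa [hcard] at heven
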